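/- arXiv:2407.09393 — 4 statements merged into one kernel-verified Lean document; each statement's English description precedes it below -/
import Mathlib

section
/- The function u(x,t) = (1 + exp(√(ρ/(6D)) (x − 5√(ρD/6) t)))^{-2} satisfies the Fisher's equation ∂u/∂t = D ∂²u/∂x² + ρ u(1 − u) at every point (x,t) ∈ ℝ². -/
/-- The exact Fisher traveling wave solution. -/
noncomputable def fisherWave (D ρ x t : ℝ) : ℝ :=
  ((1 + Real.exp (Real.sqrt (ρ / (6 * D)) * (x - 5 * Real.sqrt (ρ * D / 6) * t))) ^ 2)⁻¹

lemma hasDerivAt_fisherG (w : ℝ) :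
    HasDerivAt (fun w => ((1 + Real.exp w) ^ 2)⁻¹)
      (-2 * Real.exp w / (1 + Real.exp w) ^ 3) w := by
  have h1 : HasDerivAt (fun w => 1 + Real.exp w) (Real.exp w) w :=
    (Real.hasDerivAt_exp w).const_add 1
  have hne : (1 + Real.exp w) ≠ 0 := by positivity
  have h2 := (h1.pow 2).inv (pow_ne_zero 2 hne)
  refine h2.congr_deriv ?_
  simp only [Pi.pow_apply]
  field_simp
  ring

lemma hasDerivAt_fisherG' (w : ℝ) :
    HasDerivAt (fun w => -2 * Real.exp w / (1 + Real.exp w) ^ 3)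
      ((-2 * Real.exp w * (1 + Real.exp w) + 6 * (Real.exp w) ^ 2) / (1 + Real.exp w) ^ 4) w := by
  have h1 : HasDerivAt (fun w => 1 + Real.exp w) (Real.exp w) w :=
    (Real.hasDerivAt_exp w).const_add 1
  have hne : (1 + Real.exp w) ≠ 0 := by positivity
  have hnum : HasDerivAt (fun w => -2 * Real.exp w) (-2 * Real.exp w) w :=
    (Real.hasDerivAt_exp w).const_mul (-2)
  have hden : HasDerivAt (fun w => (1 + Real.exp w) ^ 3)
      (3 * (1 + Real.exp w) ^ 2 * Real.exp w) w := h1.pow 3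
  have h := hnum.div hden (by positivity)
  refine h.congr_deriv ?_
  field_simp
  ring

lemma fisher_key (D ρ e A B : ℝ) (hD : 0 < D) (hρ : 0 < ρ) (he : 0 < e)
    (hA : A ^ 2 = ρ / (6 * D)) (hAB : A * B = ρ / 6) :
    (-2 * e / (1 + e) ^ 3) * (A * -(5 * B)) =
      D * (((-2 * e * (1 + e) + 6 * e ^ 2) / (1 + e) ^ 4) * A * A) +
        ρ * ((1 + e) ^ 2)⁻¹ * (1 - ((1 + e) ^ 2)⁻¹) := by
  have h1e : (1 + e) ≠ 0 := by positivity
  have hDA : D * A ^ 2 = ρ / 6 := by rw [hA]; field_simp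
  have e1 : (-2 * e / (1 + e) ^ 3) * (A * -(5 * B)) = (A * B) * (10 * e / (1 + e) ^ 3) := by
    ring
  have e2 : D * (((-2 * e * (1 + e) + 6 * e ^ 2) / (1 + e) ^ 4) * A * A) =
      (D * A ^ 2) * ((-2 * e * (1 + e) + 6 * e ^ 2) / (1 + e) ^ 4) := by ring
  rw [e1, e2, hAB, hDA]
  field_simp
  ring

/-- The Fisher traveling wave satisfies ∂u/∂t = D ∂²u/∂x² + ρ u (1 − u) everywhere. -/
theorem fisherWave_solves_fisher (D ρ : ℝ) (hD : 0 < D) (hρ : 0 < ρ) (x t : ℝ) :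
    deriv (fun s => fisherWave D ρ x s) t =
      D * iteratedDeriv 2 (fun y => fisherWave D ρ y t) x +
        ρ * fisherWave D ρ x t * (1 - fisherWave D ρ x t) := by
  set A := Real.sqrt (ρ / (6 * D)) with hAdef
  set B := Real.sqrt (ρ * D / 6) with hBdef
  -- algebraic facts
  have hA2 : A ^ 2 = ρ / (6 * D) := Real.sq_sqrt (by positivity)
  have hAB : A * B = ρ / 6 := by
    rw [hAdef, hBdef, ← Real.sqrt_mul (by positivity) (ρ * D / 6),
      show ρ / (6 * D) * (ρ * D / 6) = (ρ / 6) ^ 2 by field_simp]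
    exact Real.sqrt_sq (by positivity)
  -- time derivative
  have hinner_t : HasDerivAt (fun s => A * (x - 5 * B * s)) (A * -(5 * B)) t := by
    have : HasDerivAt (fun s : ℝ => x - 5 * B * s) (-(5 * B)) t := by
      simpa using (((hasDerivAt_id t).const_mul (5 * B)).const_sub x)
    simpa using this.const_mul A
  have ht := (hasDerivAt_fisherG (A * (x - 5 * B * t))).comp t hinner_t
  -- first spatial derivative as a function
  have hinner_x : ∀ y : ℝ, HasDerivAt (fun y => A * (y - 5 * B * t)) A y := by
    intro y
    simpa using (((hasDerivAt_id y).sub_const (5 * B * t)).const_mul A)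
  have hd1 : deriv (fun y => fisherWave D ρ y t) =
      fun y => (-2 * Real.exp (A * (y - 5 * B * t)) /
        (1 + Real.exp (A * (y - 5 * B * t))) ^ 3) * A := by
    funext y
    exact ((hasDerivAt_fisherG (A * (y - 5 * B * t))).comp y (hinner_x y)).deriv
  have hd2 := (((hasDerivAt_fisherG' (A * (x - 5 * B * t))).comp x (hinner_x x)).mul_const A)
  have hdt : deriv (fun s => fisherWave D ρ x s) t =
      (-2 * Real.exp (A * (x - 5 * B * t)) / (1 + Real.exp (A * (x - 5 * B * t))) ^ 3) *
        (A * -(5 * B)) := ht.deriv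
  have hdx2 : deriv (fun y => (-2 * Real.exp (A * (y - 5 * B * t)) /
        (1 + Real.exp (A * (y - 5 * B * t))) ^ 3) * A) x =
      ((-2 * Real.exp (A * (x - 5 * B * t)) * (1 + Real.exp (A * (x - 5 * B * t))) +
        6 * Real.exp (A * (x - 5 * B * t)) ^ 2) / (1 + Real.exp (A * (x - 5 * B * t))) ^ 4) *
        A * A := hd2.deriv
  rw [iteratedDeriv_succ, iteratedDeriv_one, hd1, hdt, hdx2]
  have key := fisher_key D ρ (Real.exp (A * (x - 5 * B * t))) A B hD hρ
    (Real.exp_pos _) hA2 hAB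
  simp only [fisherWave]
  calc (-2 * Real.exp (A * (x - 5 * B * t)) / (1 + Real.exp (A * (x - 5 * B * t))) ^ 3) *
        (A * -(5 * B)) = _ := key
    _ = _ := by ring
end

section
/- Let D > 0, ρ > 0 and α > 0 be real. The function u(x,t) = ( (1/2) tanh( −(α/(2√(2α+4))) √(ρ/D) (x − ((α+4)/√(2α+4)) √(ρD) t) ) + 1/2 )^{2/α} satisfies the Newell–Whitehead–Segel equation ∂u/∂t = D ∂²u/∂x² + ρ u(1 − u^α) at every point (x,t) ∈ ℝ² (the powers are real powers of the positive base (1/2)tanh(·)+1/2 ∈ (0,1)). -/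
/-- The exact Newell–Whitehead–Segel traveling wave solution (real power of positive base). -/
noncomputable def nwsWave (D ρ α x t : ℝ) : ℝ :=
  ((1 / 2) * Real.tanh (-(α / (2 * Real.sqrt (2 * α + 4))) * Real.sqrt (ρ / D) *
      (x - ((α + 4) / Real.sqrt (2 * α + 4)) * Real.sqrt (ρ * D) * t)) + 1 / 2) ^ ((2 : ℝ) / α)

open Real

noncomputable def nwsB (z : ℝ) : ℝ := (1 / 2) * Real.tanh z + 1 / 2

lemma nwsB_pos (z : ℝ) : 0 < nwsB z := by
  have h := Real.cosh_pos z
  have h2 : Real.cosh z + Real.sinh z = Real.exp z := by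
    rw [Real.cosh_eq, Real.sinh_eq]; ring
  have : 0 < Real.cosh z + Real.sinh z := h2 ▸ Real.exp_pos z
  unfold nwsB
  rw [Real.tanh_eq_sinh_div_cosh]
  have : 0 < (Real.cosh z + Real.sinh z) / Real.cosh z := div_pos this h
  rw [add_div] at this
  have hc : Real.cosh z / Real.cosh z = 1 := div_self h.ne'
  rw [hc] at this
  linarith

lemma nwsB_lt_one (z : ℝ) : nwsB z < 1 := by
  have h := Real.cosh_pos z
  have h2 : Real.cosh z - Real.sinh z = Real.exp (-z) := by
    rw [Real.cosh_eq, Real.sinh_eq]; ring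
  have : 0 < Real.cosh z - Real.sinh z := h2 ▸ Real.exp_pos (-z)
  unfold nwsB
  rw [Real.tanh_eq_sinh_div_cosh]
  have hlt : Real.sinh z / Real.cosh z < 1 := (div_lt_one h).2 (by linarith)
  linarith

lemma nwsB_hasDerivAt (z : ℝ) : HasDerivAt nwsB (2 * nwsB z * (1 - nwsB z)) z := by
  have hc := Real.cosh_pos z
  have ht : HasDerivAt Real.tanh (1 / Real.cosh z ^ 2) z := by
    have h : HasDerivAt (fun w => Real.sinh w / Real.cosh w)
        ((Real.cosh z * Real.cosh z - Real.sinh z * Real.sinh z) / Real.cosh z ^ 2) z :=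
      (Real.hasDerivAt_sinh z).div (Real.hasDerivAt_cosh z) hc.ne'
    have heq : (fun w => Real.sinh w / Real.cosh w) = Real.tanh := by
      funext w; rw [Real.tanh_eq_sinh_div_cosh]
    rw [heq] at h
    convert h using 1
    rw [div_eq_div_iff (by positivity) (by positivity)]
    nlinarith [Real.cosh_sq_sub_sinh_sq z]
  have h : HasDerivAt nwsB ((1/2) * (1 / Real.cosh z ^ 2)) z := by
    unfold nwsB
    exact ((ht.const_mul (1/2 : ℝ)).add_const (1/2))
  convert h using 1
  have htanh : Real.tanh z = 2 * nwsB z - 1 := by unfold nwsB; ring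
  have h1 : 1 - Real.tanh z ^ 2 = 1 / Real.cosh z ^ 2 := by
    rw [Real.tanh_eq_sinh_div_cosh, div_pow,
      one_sub_div (by positivity : Real.cosh z ^ 2 ≠ 0), Real.cosh_sq_sub_sinh_sq]
  rw [← h1, htanh]; ring

noncomputable def nwsG (α z : ℝ) : ℝ := nwsB z ^ ((2:ℝ) / α)

lemma nwsG_hasDerivAt (α : ℝ) (hα : 0 < α) (z : ℝ) :
    HasDerivAt (nwsG α) ((4 / α) * (1 - nwsB z) * nwsG α z) z := by
  have hb := nwsB_pos z
  have h := (nwsB_hasDerivAt z).rpow_const (p := (2:ℝ)/α) (Or.inl hb.ne')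
  convert h using 1
  · rfl
  unfold nwsG
  have key : nwsB z ^ ((2:ℝ)/α) = nwsB z ^ ((2:ℝ)/α - 1) * nwsB z := by
    have h2 : (2:ℝ)/α = ((2:ℝ)/α - 1) + 1 := by ring
    conv_lhs => rw [h2, Real.rpow_add_one hb.ne']
  rw [key]
  field_simp
  ring

lemma nwsG'_hasDerivAt (α : ℝ) (hα : 0 < α) (z : ℝ) :
    HasDerivAt (fun w => (4 / α) * (1 - nwsB w) * nwsG α w)
      ((4 / α) * ((-(2 * nwsB z * (1 - nwsB z))) * nwsG α z +
        (1 - nwsB z) * ((4 / α) * (1 - nwsB z) * nwsG α z))) z := by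
  have hb := nwsB_hasDerivAt z
  have hg := nwsG_hasDerivAt α hα z
  have h1 : HasDerivAt (fun w => (1 - nwsB w)) (-(2 * nwsB z * (1 - nwsB z))) z :=
    (hb.const_sub 1)
  have h2 := (h1.mul hg).const_mul (4/α : ℝ)
  have heq : (fun w => (4 / α) * (1 - nwsB w) * nwsG α w)
      = fun y => 4/α * ((1 - nwsB y) * nwsG α y) := by funext w; ring
  rw [heq]
  exact h2

/-- The Newell–Whitehead–Segel traveling wave satisfies
∂u/∂t = D ∂²u/∂x² + ρ u (1 − u^α) everywhere. -/
theorem nwsWave_solves_nws (D ρ α : ℝ) (hD : 0 < D) (hρ : 0 < ρ) (hα : 0 < α) (x t : ℝ) :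
    deriv (fun s => nwsWave D ρ α x s) t =
      D * iteratedDeriv 2 (fun y => nwsWave D ρ α y t) x +
        ρ * nwsWave D ρ α x t * (1 - nwsWave D ρ α x t ^ α) := by
  have hq : (0:ℝ) < 2 * α + 4 := by linarith
  set s := Real.sqrt (2 * α + 4) with hs
  set r1 := Real.sqrt (ρ / D) with hr1
  set r2 := Real.sqrt (ρ * D) with hr2
  set A : ℝ := -(α / (2 * s)) * r1 with hA
  set c : ℝ := ((α + 4) / s) * r2 with hc
  have hwave : ∀ y τ : ℝ, nwsWave D ρ α y τ = nwsG α (A * (y - c * τ)) := by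
    intro y τ; rw [hA, hc, hs, hr1, hr2]; rfl
  set z := A * (x - c * t) with hz
  set b := nwsB z with hbdef
  set g := nwsG α z with hgdef
  -- time derivative
  have hinner_t : HasDerivAt (fun τ : ℝ => A * (x - c * τ)) (-(A * c)) t := by
    have h1 : HasDerivAt (fun τ : ℝ => x - c * τ) (0 - c * 1) t :=
      (hasDerivAt_const t x).sub ((hasDerivAt_id t).const_mul c)
    have h2 := h1.const_mul A
    convert h2 using 1
    · rfl
    · rfl
    ring
  have ht := (nwsG_hasDerivAt α hα z).comp t hinner_t
  have hderiv_t : deriv (fun τ => nwsWave D ρ α x τ) t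
      = (4 / α) * (1 - b) * g * (-(A * c)) := by
    have hfun : (fun τ => nwsWave D ρ α x τ) = fun τ => nwsG α (A * (x - c * τ)) :=
      funext fun τ => hwave x τ
    rw [hfun]; exact ht.deriv
  -- space derivatives
  have hinner_x : ∀ y : ℝ, HasDerivAt (fun w : ℝ => A * (w - c * t)) A y := by
    intro y
    have h1 : HasDerivAt (fun w : ℝ => w - c * t) 1 y := (hasDerivAt_id y).sub_const (c * t)
    have h2 := h1.const_mul A
    simpa using h2
  have hderiv_x : deriv (fun y => nwsWave D ρ α y t)
      = fun y => (4 / α) * (1 - nwsB (A * (y - c * t))) * nwsG α (A * (y - c * t)) * A := by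
    funext y
    have h := ((nwsG_hasDerivAt α hα (A * (y - c * t))).comp y (hinner_x y))
    have hfun : (fun w => nwsWave D ρ α w t) = fun w => nwsG α (A * (w - c * t)) :=
      funext fun w => hwave w t
    rw [hfun]
    exact h.deriv
  have hsecond : iteratedDeriv 2 (fun y => nwsWave D ρ α y t) x
      = ((4 / α) * ((-(2 * b * (1 - b))) * g + (1 - b) * ((4 / α) * (1 - b) * g))) * A * A := by
    rw [iteratedDeriv_succ, iteratedDeriv_one, hderiv_x]
    have h := ((nwsG'_hasDerivAt α hα z).comp x (hinner_x x)).mul_const A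
    exact h.deriv
  -- algebraic facts
  have hgα : g ^ α = b ^ 2 := by
    rw [hgdef, hbdef]
    unfold nwsG
    rw [← Real.rpow_mul (nwsB_pos z).le, div_mul_cancel₀ _ hα.ne',
      show ((2:ℝ)) = ((2:ℕ):ℝ) by norm_num, Real.rpow_natCast]
  have hs2 : s ^ 2 = 2 * α + 4 := Real.sq_sqrt hq.le
  have h12 : r1 * r2 = ρ := by
    rw [hr1, hr2, ← Real.sqrt_mul (by positivity),
      show ρ / D * (ρ * D) = ρ ^ 2 by field_simp]
    exact Real.sqrt_sq hρ.le
  have hr1sq : r1 ^ 2 = ρ / D := Real.sq_sqrt (by positivity)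
  have hAc : A * c = -(α * (α + 4) * ρ / (2 * (2 * α + 4))) := by
    have h : A * c = -(α * (α + 4) * (r1 * r2) / (2 * s ^ 2)) := by rw [hA, hc]; ring
    rw [h12, hs2] at h
    exact h
  have hDA2 : D * A ^ 2 = α ^ 2 * ρ / (4 * (2 * α + 4)) := by
    have h : D * A ^ 2 = α ^ 2 * (D * r1 ^ 2) / (4 * s ^ 2) := by rw [hA]; ring
    rw [hr1sq, hs2] at h
    rw [h]
    field_simp
  -- put it together
  rw [hderiv_t, hsecond, hwave x t, ← hz, ← hgdef, hgα]
  have e1 : D * (((4 / α) * ((-(2 * b * (1 - b))) * g + (1 - b) * ((4 / α) * (1 - b) * g))) * A * A)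
      = ((4 / α) * ((-(2 * b * (1 - b))) * g + (1 - b) * ((4 / α) * (1 - b) * g))) * (D * A ^ 2) := by
    ring
  rw [e1, hDA2, hAc]
  field_simp
  ring
end

section
/- Let h : ℝ → ℝ be continuous and let Δx > 0. Define u(x) = (1/Δx²) ∫_{x−Δx/2}^{x+Δx/2} ( ∫_{η−Δx/2}^{η+Δx/2} h(ξ) dξ ) dη. Then u is twice differentiable on ℝ and u''(x) = ( h(x+Δx) − 2h(x) + h(x−Δx) ) / Δx² for every x ∈ ℝ. -/
lemma sliding_hasDerivAt (f : ℝ → ℝ) (hf : Continuous f) (c : ℝ) (x : ℝ) :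
    HasDerivAt (fun y => ∫ t in (y - c)..(y + c), f t) (f (x + c) - f (x - c)) x := by
  have hF : ∀ y : ℝ, HasDerivAt (fun z => ∫ t in (0:ℝ)..z, f t) (f y) y := fun y =>
    intervalIntegral.integral_hasDerivAt_right (hf.intervalIntegrable _ _)
      (hf.stronglyMeasurableAtFilter _ _) hf.continuousAt
  have h1 : HasDerivAt (fun y : ℝ => ∫ t in (0:ℝ)..(y + c), f t) (f (x + c)) x := by
    have := (hF (x + c)).comp x ((hasDerivAt_id x).add_const c)
    simpa [Function.comp_def] using this
  have h2 : HasDerivAt (fun y : ℝ => ∫ t in (0:ℝ)..(y - c), f t) (f (x - c)) x := by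
    have := (hF (x - c)).comp x ((hasDerivAt_id x).sub_const c)
    simpa [Function.comp_def] using this
  have heq : (fun y : ℝ => ∫ t in (y - c)..(y + c), f t) =
      fun y : ℝ => (∫ t in (0:ℝ)..(y + c), f t) - ∫ t in (0:ℝ)..(y - c), f t := by
    funext y
    exact (intervalIntegral.integral_interval_sub_left (hf.intervalIntegrable _ _)
      (hf.intervalIntegrable _ _)).symm
  rw [heq]
  exact h1.sub h2

/-- If u is the sliding double cell average of a continuous function h with spacing Δx > 0,
then u is twice differentiable and u''(x) = (h(x+Δx) − 2h(x) + h(x−Δx))/Δx². -/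
theorem slidingAverage_second_deriv (h : ℝ → ℝ) (hh : Continuous h) (Δx : ℝ) (hΔx : 0 < Δx)
    (u : ℝ → ℝ)
    (hu : ∀ x : ℝ, u x =
      (1 / Δx ^ 2) * ∫ η in (x - Δx / 2)..(x + Δx / 2),
        ∫ ξ in (η - Δx / 2)..(η + Δx / 2), h ξ) :
    ∀ x : ℝ, DifferentiableAt ℝ u x ∧ DifferentiableAt ℝ (deriv u) x ∧
      deriv (deriv u) x = (h (x + Δx) - 2 * h x + h (x - Δx)) / Δx ^ 2 := by
  set c : ℝ := Δx / 2 with hc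
  set g : ℝ → ℝ := fun y => ∫ ξ in (y - c)..(y + c), h ξ with hg
  have hgD : ∀ y : ℝ, HasDerivAt g (h (y + c) - h (y - c)) y := fun y =>
    sliding_hasDerivAt h hh c y
  have hgC : Continuous g := continuous_iff_continuousAt.2 fun y => (hgD y).continuousAt
  set u1 : ℝ → ℝ := fun y => (1 / Δx ^ 2) * (g (y + c) - g (y - c)) with hu1
  have hueq : u = fun y => (1 / Δx ^ 2) * ∫ η in (y - c)..(y + c), g η := funext hu
  have hU : ∀ y : ℝ, HasDerivAt u (u1 y) y := by
    intro y
    rw [hueq]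
    exact (sliding_hasDerivAt g hgC c y).const_mul _
  have hderiv : deriv u = u1 := funext fun y => (hU y).deriv
  intro x
  have hg1 : HasDerivAt (fun y : ℝ => g (y + c)) (h (x + c + c) - h (x + c - c)) x := by
    have := (hgD (x + c)).comp x ((hasDerivAt_id x).add_const c)
    simpa [Function.comp_def] using this
  have hg2 : HasDerivAt (fun y : ℝ => g (y - c)) (h (x - c + c) - h (x - c - c)) x := by
    have := (hgD (x - c)).comp x ((hasDerivAt_id x).sub_const c)
    simpa [Function.comp_def] using this
  have hU1 : HasDerivAt u1 ((1 / Δx ^ 2) *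
      ((h (x + c + c) - h (x + c - c)) - (h (x - c + c) - h (x - c - c)))) x :=
    (hg1.sub hg2).const_mul _
  refine ⟨(hU x).differentiableAt, ?_, ?_⟩
  · rw [hderiv]; exact hU1.differentiableAt
  · rw [hderiv, hU1.deriv]
    have e1 : x + c + c = x + Δx := by rw [hc]; ring
    have e2 : x + c - c = x := by ring
    have e3 : x - c + c = x := by ring
    have e4 : x - c - c = x - Δx := by rw [hc]; ring
    rw [e1, e2, e3, e4]
    ring
end

section
/- Let f : ℝ → ℝ be eight times continuously differentiable and fix x ∈ ℝ. Then the sixth-order centered finite difference approximation error, namely the function of Δx given by (1/Δx²) [ (1/90)(f(x−3Δx) + f(x+3Δx)) − (3/20)(f(x−2Δx) + f(x+2Δx)) + (3/2)(f(x−Δx) + f(x+Δx)) − (49/18) f(x) ] − f''(x), is O(Δx⁶) as Δx → 0. -/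
open Asymptotics


open Filter Topology
lemma bigO_of_derivs_zero : ∀ (n : ℕ) (g : ℝ → ℝ), ContDiff ℝ n g →
    (∀ k < n, iteratedDeriv k g 0 = 0) → g =O[𝓝 (0:ℝ)] fun h => h ^ n := by
  intro n
  induction n with
  | zero =>
    intro g hg _
    simpa using (hg.continuous.continuousAt (x := (0:ℝ))).isBigO_one ℝ
  | succ n ih =>
    intro g hg hd
    have hdiff : Differentiable ℝ g :=
      hg.differentiable (by simp)
    have hder : ContDiff ℝ n (deriv g) := (contDiff_succ_iff_deriv.mp (by exact_mod_cast hg)).2.2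
    have hder0 : ∀ k < n, iteratedDeriv k (deriv g) 0 = 0 := by
      intro k hk
      rw [← iteratedDeriv_succ']
      exact hd (k + 1) (by omega)
    obtain ⟨c, hc0, hc⟩ := (ih (deriv g) hder hder0).exists_nonneg
    rw [isBigOWith_iff] at hc
    rw [Metric.eventually_nhds_iff] at hc
    obtain ⟨δ, hδ, hball⟩ := hc
    rw [isBigO_iff]
    refine ⟨c, ?_⟩
    rw [Metric.eventually_nhds_iff]
    refine ⟨δ, hδ, fun h hh => ?_⟩
    have hg0 : g 0 = 0 := by simpa using hd 0 (by omega)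
    have hhn : |h| < δ := by simpa [Real.dist_eq] using hh
    have key : ‖g h - g 0‖ ≤ c * |h| ^ n * ‖h - 0‖ := by
      apply Convex.norm_image_sub_le_of_norm_hasDerivWithin_le
        (f := g) (f' := deriv g) (s := Set.uIcc 0 h)
        (fun t ht => (hdiff t).hasDerivAt.hasDerivWithinAt) ?_ (convex_uIcc 0 h)
        (Set.left_mem_uIcc) (Set.right_mem_uIcc)
      intro t ht
      have habs : |t| ≤ |h| := by
        rcases Set.mem_uIcc.mp ht with ⟨h1, h2⟩ | ⟨h1, h2⟩ <;>
          rw [abs_le] <;> constructor <;> cases abs_cases h <;> linarith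
      have := hball (y := t) (by simpa [Real.dist_eq] using lt_of_le_of_lt habs hhn)
      calc ‖deriv g t‖ ≤ c * ‖t ^ n‖ := this
        _ ≤ c * |h| ^ n := by
            rw [norm_pow]
            exact mul_le_mul_of_nonneg_left (pow_le_pow_left₀ (abs_nonneg t) habs n) hc0
    rw [hg0, sub_zero, sub_zero] at key
    calc ‖g h‖ ≤ c * |h| ^ n * ‖h‖ := key
      _ = c * ‖h ^ (n+1)‖ := by rw [norm_pow]; simp [Real.norm_eq_abs, pow_succ]; ring

lemma itd_scale {f : ℝ → ℝ} {k : ℕ} (hf : ContDiff ℝ k f) (x c : ℝ) :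
    iteratedDeriv k (fun h => f (x + c * h)) 0 = c ^ k * iteratedDeriv k f x := by
  have h1 : (fun h : ℝ => f (x + c * h)) = (fun z : ℝ => f (x + z)) ∘ (fun h => c * h) := rfl
  have h2 : ContDiff ℝ k (fun z : ℝ => f (x + z)) :=
    hf.comp (contDiff_const.add contDiff_id)
  rw [h1]
  have := iteratedDeriv_comp_const_mul h2 c
  rw [Function.comp_def, this]
  simp [iteratedDeriv_comp_const_add]

lemma itd_add {k : ℕ} {u v : ℝ → ℝ} (hu : ContDiff ℝ k u) (hv : ContDiff ℝ k v) (y : ℝ) :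
    iteratedDeriv k (fun h => u h + v h) y = iteratedDeriv k u y + iteratedDeriv k v y := by
  simp only [iteratedDeriv_eq_iteratedFDeriv]
  rw [show (fun h => u h + v h) = u + v from rfl, iteratedFDeriv_add_apply hu.contDiffAt hv.contDiffAt]
  rfl

lemma itd_smul {k : ℕ} {u : ℝ → ℝ} (hu : ContDiff ℝ k u) (a y : ℝ) :
    iteratedDeriv k (fun h => a * u h) y = a * iteratedDeriv k u y := by
  simp only [iteratedDeriv_eq_iteratedFDeriv]
  rw [show (fun h => a * u h) = a • u from rfl, iteratedFDeriv_const_smul_apply hu.contDiffAt]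
  rfl

lemma itd_sub {k : ℕ} {u v : ℝ → ℝ} (hu : ContDiff ℝ k u) (hv : ContDiff ℝ k v) (y : ℝ) :
    iteratedDeriv k (fun h => u h - v h) y = iteratedDeriv k u y - iteratedDeriv k v y := by
  have := itd_add hu ((contDiff_const (c := (-1:ℝ))).mul hv) y
  simp only [show (fun h => u h + -1 * v h) = fun h => u h - v h by funext h; ring] at this
  rw [this, itd_smul hv]
  ring

lemma itd_sq (c : ℝ) : ∀ k : ℕ, k ≤ 7 →
    iteratedDeriv k (fun h : ℝ => c * h ^ 2) 0 = if k = 2 then 2 * c else 0 := by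
  have d1 : deriv (fun h : ℝ => c * h ^ 2) = fun h => c * (2 * h) := by
    funext h
    rw [deriv_const_mul _ (differentiableAt_pow 2)]
    simp
  have d2 : deriv (fun h : ℝ => c * (2 * h)) = fun _ => 2 * c := by
    funext h
    rw [deriv_const_mul _ ((differentiableAt_fun_id).const_mul 2),
      deriv_const_mul _ differentiableAt_fun_id]
    simp [mul_comm]
  have d3 : deriv (fun _ : ℝ => 2 * c) = fun _ : ℝ => (0:ℝ) := by
    funext h; simp
  intro k hk
  interval_cases k <;> simp [iteratedDeriv_succ', d1, d2, d3, mul_comm]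




/-- The sixth-order centered finite difference approximation of the second derivative of an
eight times continuously differentiable function has error O(Δx⁶) as Δx → 0. -/
theorem sixth_order_centered_fd_isBigO (f : ℝ → ℝ) (hf : ContDiff ℝ 8 f) (x : ℝ) :
    (fun Δx : ℝ =>
      (1 / Δx ^ 2) * ((1 / 90) * (f (x - 3 * Δx) + f (x + 3 * Δx))
        - (3 / 20) * (f (x - 2 * Δx) + f (x + 2 * Δx))
        + (3 / 2) * (f (x - Δx) + f (x + Δx))
        - (49 / 18) * f x) - iteratedDeriv 2 f x)
      =O[nhdsWithin 0 {0}ᶜ] fun Δx : ℝ => Δx ^ 6 := by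
  set D := iteratedDeriv 2 f x with hD
  set g : ℝ → ℝ → ℝ := fun c h => f (x + c * h) with hgdef
  set E : ℝ → ℝ := fun h =>
    ((1 / 90) * (g (-3) h + g 3 h) - (3 / 20) * (g (-2) h + g 2 h)
      + (3 / 2) * (g (-1) h + g 1 h) - (49 / 18) * g 0 h) - D * h ^ 2 with hEdef
  have hg8 : ∀ c : ℝ, ContDiff ℝ 8 (g c) :=
    fun c => hf.comp (contDiff_const.add (contDiff_const.mul contDiff_id))
  -- E is C^8
  have hE8 : ContDiff ℝ 8 E := by
    apply ContDiff.sub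
    · exact ((((contDiff_const.mul ((hg8 (-3)).add (hg8 3))).sub
        (contDiff_const.mul ((hg8 (-2)).add (hg8 2)))).add
        (contDiff_const.mul ((hg8 (-1)).add (hg8 1)))).sub
        (contDiff_const.mul (hg8 0)))
    · exact contDiff_const.mul (contDiff_id.pow 2)
  -- derivatives of E vanish at 0 up to order 7
  have hEk : ∀ k < 8, iteratedDeriv k E 0 = 0 := by
    intro k hk
    have hk8 : (k : WithTop ℕ∞) ≤ 8 := by exact_mod_cast Nat.le_of_lt hk
    have hgk : ∀ c : ℝ, ContDiff ℝ k (g c) := fun c => (hg8 c).of_le hk8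
    have hfk : ContDiff ℝ k f := hf.of_le hk8
    have hsc : ∀ c : ℝ, iteratedDeriv k (g c) 0 = c ^ k * iteratedDeriv k f x :=
      fun c => itd_scale hfk x c
    have c3 : ContDiff ℝ k (fun h => (1/90 : ℝ) * (g (-3) h + g 3 h)) :=
      contDiff_const.mul ((hgk (-3)).add (hgk 3))
    have c2' : ContDiff ℝ k (fun h => (3/20 : ℝ) * (g (-2) h + g 2 h)) :=
      contDiff_const.mul ((hgk (-2)).add (hgk 2))
    have c1 : ContDiff ℝ k (fun h => (3/2 : ℝ) * (g (-1) h + g 1 h)) :=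
      contDiff_const.mul ((hgk (-1)).add (hgk 1))
    have c0 : ContDiff ℝ k (fun h => (49/18 : ℝ) * g 0 h) :=
      contDiff_const.mul (hgk 0)
    have cq : ContDiff ℝ k (fun h : ℝ => D * h ^ 2) := contDiff_const.mul (contDiff_id.pow 2)
    rw [hEdef]
    rw [itd_sub (((c3.sub c2').add c1).sub c0) cq 0,
      itd_sub ((c3.sub c2').add c1) c0 0,
      itd_add (c3.sub c2') c1 0,
      itd_sub c3 c2' 0,
      itd_smul ((hgk (-3)).add (hgk 3)) _ 0,
      itd_smul ((hgk (-2)).add (hgk 2)) _ 0,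
      itd_smul ((hgk (-1)).add (hgk 1)) _ 0,
      itd_smul (hgk 0) _ 0,
      itd_add (hgk (-3)) (hgk 3) 0,
      itd_add (hgk (-2)) (hgk 2) 0,
      itd_add (hgk (-1)) (hgk 1) 0,
      hsc (-3), hsc 3, hsc (-2), hsc 2, hsc (-1), hsc 1, hsc 0,
      itd_sq D k (by omega)]
    interval_cases k <;> (norm_num [hD]; try ring)
  have hE : E =O[𝓝 (0:ℝ)] fun h => h ^ 8 := bigO_of_derivs_zero 8 E hE8 hEk
  have hmul : (fun h => E h * (h ^ 2)⁻¹) =O[nhdsWithin (0:ℝ) {0}ᶜ]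
      fun h => h ^ 8 * (h ^ 2)⁻¹ :=
    (hE.mono nhdsWithin_le_nhds).mul (isBigO_refl _ _)
  refine hmul.congr' ?_ ?_
  · refine Filter.eventually_of_mem self_mem_nhdsWithin (fun h hh => ?_)
    have hh0 : h ≠ 0 := hh
    rw [hEdef]
    simp only [hgdef]
    have e1 : x + (-3) * h = x - 3 * h := by ring
    have e2 : x + (-2) * h = x - 2 * h := by ring
    have e3 : x + (-1) * h = x - h := by ring
    have e4 : x + (1:ℝ) * h = x + h := by ring
    have e5 : x + (0:ℝ) * h = x := by ring
    rw [e1, e2, e3, e4, e5]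
    field_simp
  · refine Filter.eventually_of_mem self_mem_nhdsWithin (fun h hh => ?_)
    have hh0 : h ≠ 0 := hh
    field_simp
end
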